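/- Let T be a real symmetric n×n matrix with T_{nn} = 1, T_{in} = 0 for 2 ≤ i ≤ n-1, T_{1n} ∈ {0,1/2}, and all eigenvalues of the upper-left block T̂ at least 3. If U ∈ GL(n,ℤ) satisfies ∑_{i,j=1}^n T_{ij} U_{nj} U_{ni} = 1, then U_{ni} = 0 for all 1 ≤ i ≤ n-1 and U_{nn} = ±1; consequently U has block upper-triangular form with an (n-1)×(n-1) unimodular block Û in the upper-left, arbitrary integer entries U_{in} (1 ≤ i ≤ n-1) in the last column, last row (0,...,0,±1). -/

import Mathlib

open Finset

/-- With T as in Statement 0, if U ∈ GL(n,ℤ) satisfies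
∑_{i,j} T_{ij} U_{nj} U_{ni} = 1, then the last row of U is (0,...,0,±1);
consequently the upper-left (n-1)×(n-1) block Û of U is unimodular. -/
theorem stmt1 (m : ℕ) (hm : 1 ≤ m) (T : Matrix (Fin (m+1)) (Fin (m+1)) ℝ)
    (hsymm : T.IsSymm)
    (hTnn : T (Fin.last m) (Fin.last m) = 1)
    (hTin : ∀ i : Fin m, 1 ≤ (i : ℕ) → T (Fin.castSucc i) (Fin.last m) = 0)
    (hT1n : T (Fin.castSucc ⟨0, hm⟩) (Fin.last m) = 0 ∨
            T (Fin.castSucc ⟨0, hm⟩) (Fin.last m) = 1/2)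
    (heig : ∀ x : Fin m → ℝ,
      3 * ∑ i, x i ^ 2 ≤
        ∑ i, ∑ j, T (Fin.castSucc i) (Fin.castSucc j) * x i * x j)
    (U : Matrix (Fin (m+1)) (Fin (m+1)) ℤ) (hU : IsUnit U.det)
    (hone : ∑ i, ∑ j, T i j * (U (Fin.last m) j : ℝ) * (U (Fin.last m) i : ℝ) = 1) :
    (∀ i : Fin m, U (Fin.last m) (Fin.castSucc i) = 0) ∧
    (U (Fin.last m) (Fin.last m) = 1 ∨ U (Fin.last m) (Fin.last m) = -1) ∧
    IsUnit (U.submatrix (Fin.castSucc : Fin m → Fin (m+1)) Fin.castSucc).det := by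
  set n := Fin.last m with hn
  set x : Fin m → ℤ := fun i => U n (Fin.castSucc i) with hxdef
  set a : ℤ := U n n with hadef
  set c : ℝ := T (Fin.castSucc ⟨0, hm⟩) n with hcdef
  have hsym : ∀ i j, T j i = T i j := fun i j => hsymm.apply i j
  -- rewrite hone
  have hcross : ∀ b : ℝ, (∑ j : Fin m, T n (Fin.castSucc j) * (x j : ℝ) * b)
      = c * (x ⟨0, hm⟩ : ℝ) * b := by
    intro b
    rw [Finset.sum_eq_single ⟨0, hm⟩]
    · rw [hsym]
    · intro j _ hj
      rw [hsym, hTin j (Nat.one_le_iff_ne_zero.mpr (fun h => hj (Fin.ext h)))]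
      ring
    · simp
  have key : (∑ i : Fin m, ∑ j : Fin m,
        T (Fin.castSucc i) (Fin.castSucc j) * (x j : ℝ) * (x i : ℝ))
      + 2 * (c * (x ⟨0, hm⟩ : ℝ) * (a : ℝ)) + (a : ℝ) ^ 2 = 1 := by
    rw [← hone, Fin.sum_univ_castSucc
      (f := fun i => ∑ j, T i j * (U n j : ℝ) * (U n i : ℝ))]
    have h2 : ∀ i : Fin m, (∑ j : Fin (m+1), T (Fin.castSucc i) j * (U n j : ℝ) * (x i : ℝ))
        = (∑ j : Fin m, T (Fin.castSucc i) (Fin.castSucc j) * (x j : ℝ) * (x i : ℝ))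
          + T (Fin.castSucc i) n * (a : ℝ) * (x i : ℝ) := by
      intro i
      rw [Fin.sum_univ_castSucc]
    have h3 : (∑ i : Fin m, T (Fin.castSucc i) n * (a : ℝ) * (x i : ℝ))
        = c * (x ⟨0, hm⟩ : ℝ) * (a : ℝ) := by
      rw [Finset.sum_eq_single ⟨0, hm⟩]
      · ring
      · intro j _ hj
        rw [hTin j (Nat.one_le_iff_ne_zero.mpr (fun h => hj (Fin.ext h)))]
        ring
      · simp
    rw [Fin.sum_univ_castSucc (f := fun j => T n j * (U n j : ℝ) * (U n n : ℝ))]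
    change _ = ∑ i : Fin m, ∑ j, T (Fin.castSucc i) j * (U n j : ℝ) * (x i : ℝ)
      + (∑ i : Fin m, T n (Fin.castSucc i) * (x i : ℝ) * (a : ℝ) + T n n * (a : ℝ) * (a : ℝ))
    simp only [h2, Finset.sum_add_distrib, h3, hcross, hTnn]
    ring
  have hS : 3 * (∑ i : Fin m, ((x i : ℝ)) ^ 2)
      ≤ ∑ i : Fin m, ∑ j : Fin m,
        T (Fin.castSucc i) (Fin.castSucc j) * (x j : ℝ) * (x i : ℝ) := by
    have := heig (fun i => (x i : ℝ))
    simpa [mul_right_comm] using this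
  have hsingle : ∀ i : Fin m, ((x i : ℝ)) ^ 2 ≤ ∑ j : Fin m, ((x j : ℝ)) ^ 2 := by
    intro i
    exact Finset.single_le_sum (f := fun j => ((x j : ℝ)) ^ 2)
      (fun j _ => sq_nonneg _) (Finset.mem_univ i)
  have hne : ∀ i : Fin m, x i ≠ 0 → (1 : ℝ) ≤ ((x i : ℝ)) ^ 2 := by
    intro i h
    have h1 : (1 : ℤ) ≤ x i ^ 2 := by rcases h.lt_or_gt with h | h <;> nlinarith
    exact_mod_cast h1
  -- Step A : x 0 = 0
  have hx0 : x ⟨0, hm⟩ = 0 := by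
    by_contra h
    have h1 := hne _ h
    have h2 := hsingle ⟨0, hm⟩
    rcases hT1n with hc0 | hc0 <;> rw [hc0] at key <;>
      nlinarith [sq_nonneg ((x ⟨0, hm⟩ : ℝ) + 2 * (a : ℝ)), sq_nonneg (a : ℝ)]
  -- Step B : all x i = 0
  have hall : ∀ i : Fin m, x i = 0 := by
    intro i
    by_contra h
    have h1 := hne i h
    have h2 := hsingle i
    rw [hx0] at key
    push_cast at key
    nlinarith [sq_nonneg (a : ℝ)]
  -- Step C : a = ±1
  have ha1 : a = 1 ∨ a = -1 := by
    have hSz : (∑ i : Fin m, ∑ j : Fin m,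
        T (Fin.castSucc i) (Fin.castSucc j) * (x j : ℝ) * (x i : ℝ)) = 0 := by
      simp [hall]
    rw [hSz, hx0] at key
    push_cast at key
    have : (a : ℝ) ^ 2 = 1 := by linarith
    have h2 : a * a = 1 := by
      have : ((a * a : ℤ) : ℝ) = ((1 : ℤ) : ℝ) := by push_cast; nlinarith
      exact_mod_cast this
    exact mul_self_eq_one_iff.mp h2
  refine ⟨hall, ha1, ?_⟩
  -- determinant
  have hdet : U.det = a * (U.submatrix Fin.castSucc Fin.castSucc).det := by
    rw [Matrix.det_succ_row U (Fin.last m)]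
    rw [Finset.sum_eq_single (Fin.last m)]
    · have he : Even ((Fin.last m : ℕ) + (Fin.last m : ℕ)) := ⟨m, rfl⟩
      rw [Fin.succAbove_last, he.neg_one_pow, one_mul]
    · intro j _ hj
      obtain ⟨j', rfl⟩ := Fin.exists_castSucc_eq.mpr hj
      have h0 : U (Fin.last m) j'.castSucc = 0 := hall j'
      rw [h0]
      ring
    · simp
  rw [hdet] at hU
  exact isUnit_of_mul_isUnit_right hU
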